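/- Let L/K be a finite Galois extension of fields and V a finite-dimensional L-vector space equipped with a semilinear action of Gal(L/K) (i.e., σ(a·v) = σ(a)·σ(v) for a ∈ L, v ∈ V). Then the natural map L ⊗_K V^{Gal(L/K)} → V, a ⊗ v ↦ a·v, is an isomorphism of L-vector spaces. -/

import Mathlib

open scoped TensorProduct

/-- The `K`-subspace of vectors of `V` invariant under a semilinear action of
`Gal(L/K)` on the `L`-vector space `V`. -/
def galoisInvariants {K L V : Type*} [Field K] [Field L] [Algebra K L]
    [AddCommGroup V] [Module K V] [Module L V] [IsScalarTower K L V]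
    (ρ : (L ≃ₐ[K] L) →* Multiplicative (AddAut V))
    (hρ : ∀ (σ : L ≃ₐ[K] L) (a : L) (v : V), Multiplicative.toAdd (ρ σ) (a • v) = σ a • Multiplicative.toAdd (ρ σ) v) :
    Submodule K V where
  carrier := {v | ∀ σ : L ≃ₐ[K] L, Multiplicative.toAdd (ρ σ) v = v}
  add_mem' := by
    intro x y hx hy σ
    rw [map_add, hx σ, hy σ]
  zero_mem' := by
    intro σ
    exact map_zero _
  smul_mem' := by
    intro c v hv σ
    have h1 : (c : K) • v = (algebraMap K L c) • v := (algebraMap_smul L c v).symm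
    rw [h1, hρ σ (algebraMap K L c) v, hv σ, AlgEquiv.commutes, algebraMap_smul]

section Aux

variable {K L V : Type*} [Field K] [Field L] [Algebra K L]
    [AddCommGroup V] [Module K V] [Module L V] [IsScalarTower K L V]
    (ρ : (L ≃ₐ[K] L) →* Multiplicative (AddAut V))
    (hρ : ∀ (σ : L ≃ₐ[K] L) (a : L) (v : V), Multiplicative.toAdd (ρ σ) (a • v) = σ a • Multiplicative.toAdd (ρ σ) v)

variable [FiniteDimensional K L] [IsGalois K L]

lemma aux_fixed_mem_range {x : L} (hx : ∀ σ : L ≃ₐ[K] L, σ x = x) :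
    ∃ c : K, algebraMap K L c = x := by
  have hbot : IntermediateField.fixedField (⊤ : Subgroup (L ≃ₐ[K] L)) = ⊥ :=
    (IsGalois.tfae.out 0 1).mp (inferInstance : IsGalois K L)
  have hmem : x ∈ IntermediateField.fixedField (⊤ : Subgroup (L ≃ₐ[K] L)) := by
    intro g
    exact hx g
  rw [hbot, IntermediateField.mem_bot] at hmem
  exact hmem

/-- `K`-linearly independent invariant vectors are `L`-linearly independent. -/
lemma aux_li {ι : Type*} (w : ι → galoisInvariants ρ hρ)
    (hw : LinearIndependent K w) : LinearIndependent L (fun i => (w i : V)) := by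
  classical
  rw [linearIndependent_iff']
  suffices H : ∀ (n : ℕ) (s : Finset ι), s.card ≤ n → ∀ g : ι → L,
      (∑ i ∈ s, g i • (w i : V)) = 0 → ∀ i ∈ s, g i = 0 by
    exact fun s g hg i hi => H s.card s le_rfl g hg i hi
  intro n
  induction n with
  | zero =>
    intro s hs g hg i hi
    rw [Nat.le_zero, Finset.card_eq_zero] at hs
    subst hs
    exact absurd hi (Finset.notMem_empty i)
  | succ n ih =>
    intro s hs g hg
    by_contra hcon
    push_neg at hcon
    obtain ⟨j, hj, hgj⟩ := hcon
    set g' : ι → L := fun i => (g j)⁻¹ * g i with hg'def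
    have hg'j : g' j = 1 := inv_mul_cancel₀ hgj
    have hg' : ∑ i ∈ s, g' i • (w i : V) = 0 := by
      have h := congrArg (fun x : V => (g j)⁻¹ • x) hg
      simpa [Finset.smul_sum, smul_smul, hg'def] using h
    have hfix : ∀ σ : L ≃ₐ[K] L, ∀ i ∈ s, σ (g' i) = g' i := by
      intro σ
      have h1 : ∑ i ∈ s, (σ (g' i)) • (w i : V) = 0 := by
        have h := congrArg (⇑(Multiplicative.toAdd (ρ σ) : V ≃+ V)) hg'
        rw [map_sum, map_zero] at h
        have h2 : ∀ i ∈ s, Multiplicative.toAdd (ρ σ) (g' i • (w i : V)) = σ (g' i) • (w i : V) := by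
          intro i _
          rw [hρ σ (g' i) (w i : V), (w i).2 σ]
        rwa [Finset.sum_congr rfl h2] at h
      have h2 : ∑ i ∈ s, (σ (g' i) - g' i) • (w i : V) = 0 := by
        simp only [sub_smul, Finset.sum_sub_distrib, h1, hg', sub_zero]
      have h3 : ∑ i ∈ s.erase j, (σ (g' i) - g' i) • (w i : V) = 0 := by
        rw [Finset.sum_erase _ (by rw [hg'j, map_one, sub_self, zero_smul])]
        exact h2
      have hcard : (s.erase j).card ≤ n := by
        have := Finset.card_erase_of_mem hj
        omega
      have h4 := ih (s.erase j) hcard _ h3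
      intro i hi
      by_cases hij : i = j
      · subst hij
        rw [hg'j, map_one]
      · exact sub_eq_zero.mp (h4 i (Finset.mem_erase.mpr ⟨hij, hi⟩))
    have hK : ∀ i, i ∈ s → ∃ c : K, algebraMap K L c = g' i := by
      intro i hi
      exact aux_fixed_mem_range (fun σ => hfix σ i hi)
    set c : ι → K := fun i => if h : i ∈ s then (hK i h).choose else 0 with hcdef
    have hc : ∀ i ∈ s, algebraMap K L (c i) = g' i := by
      intro i hi
      simp only [hcdef, dif_pos hi]
      exact (hK i hi).choose_spec
    have hsum : ∑ i ∈ s, c i • w i = (0 : galoisInvariants ρ hρ) := by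
      apply Subtype.ext
      have : ((∑ i ∈ s, c i • w i : galoisInvariants ρ hρ) : V)
          = ∑ i ∈ s, g' i • (w i : V) := by
        push_cast
        refine Finset.sum_congr rfl fun i hi => ?_
        rw [← hc i hi, algebraMap_smul]
      rw [this, hg']
      rfl
    have hzero := linearIndependent_iff'.mp hw s c hsum j hj
    have : g' j = 0 := by rw [← hc j hj, hzero, map_zero]
    rw [hg'j] at this
    exact one_ne_zero this

/-- The invariants span `V` over `L`. -/
lemma aux_span [FiniteDimensional L V] :
    Submodule.span L ((galoisInvariants ρ hρ : Submodule K V) : Set V) = ⊤ := by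
  classical
  by_contra hne
  obtain ⟨v, hv⟩ : ∃ v : V,
      v ∉ Submodule.span L ((galoisInvariants ρ hρ : Submodule K V) : Set V) := by
    by_contra h
    push_neg at h
    exact hne (Submodule.eq_top_iff'.mpr h)
  obtain ⟨f, hfv, hfbot⟩ := Submodule.exists_dual_map_eq_bot_of_notMem hv inferInstance
  set c : (L ≃ₐ[K] L) → L := fun σ => f (Multiplicative.toAdd (ρ σ) v) with hcdef
  have hwmem : ∀ a : L, (∑ σ : L ≃ₐ[K] L, σ a • Multiplicative.toAdd (ρ σ) v) ∈ galoisInvariants ρ hρ := by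
    intro a τ
    rw [map_sum]
    have h1 : ∀ σ : L ≃ₐ[K] L, Multiplicative.toAdd (ρ τ) (σ a • Multiplicative.toAdd (ρ σ) v) = (τ * σ) a • Multiplicative.toAdd (ρ (τ * σ)) v := by
      intro σ
      rw [hρ τ (σ a) (Multiplicative.toAdd (ρ σ) v), map_mul]
      rfl
    rw [Finset.sum_congr rfl (fun σ _ => h1 σ)]
    exact Fintype.sum_equiv (Equiv.mulLeft τ) _ _ (fun σ => rfl)
  have hkey : ∀ a : L, ∑ σ : L ≃ₐ[K] L, σ a * c σ = 0 := by
    intro a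
    have hmem : (∑ σ : L ≃ₐ[K] L, σ a • Multiplicative.toAdd (ρ σ) v) ∈
        Submodule.span L ((galoisInvariants ρ hρ : Submodule K V) : Set V) :=
      Submodule.subset_span (hwmem a)
    have : f (∑ σ : L ≃ₐ[K] L, σ a • Multiplicative.toAdd (ρ σ) v) = 0 := by
      have := Submodule.mem_map_of_mem (f := f) hmem
      rw [hfbot] at this
      exact this
    rw [map_sum] at this
    simpa [smul_eq_mul, hcdef] using this
  have hli : LinearIndependent L
      (fun σ : L ≃ₐ[K] L => ((σ : L →ₐ[K] L).toLinearMap : L →ₗ[K] L)) := by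
    exact (linearIndependent_toLinearMap K L L).comp _
      (fun σ τ h => AlgEquiv.coe_algHom_injective h)
  have hzero : ∀ σ : L ≃ₐ[K] L, c σ = 0 := by
    intro σ
    refine linearIndependent_iff'.mp hli Finset.univ c ?_ σ (Finset.mem_univ σ)
    ext a
    simp only [LinearMap.coe_sum, Finset.sum_apply, LinearMap.smul_apply,
      AlgHom.toLinearMap_apply, AlgHom.coe_coe, LinearMap.zero_apply, smul_eq_mul]
    rw [← hkey a]
    exact Finset.sum_congr rfl fun σ _ => mul_comm _ _
  have h1 : c 1 = f v := by
    simp [hcdef]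
  rw [hzero 1] at h1
  exact hfv h1.symm

end Aux

/-- (Galois descent.)  Let `L/K` be a finite Galois extension and `V`
a finite-dimensional `L`-vector space equipped with a semilinear action of `Gal(L/K)`,
i.e. `σ(a·v) = σ(a)·σ(v)`.  Then the natural map
`L ⊗_K V^{Gal(L/K)} → V`, `a ⊗ v ↦ a·v`, is an isomorphism of `L`-vector spaces. -/
theorem statement12 {K L V : Type*} [Field K] [Field L] [Algebra K L]
    [FiniteDimensional K L] [IsGalois K L]
    [AddCommGroup V] [Module K V] [Module L V] [IsScalarTower K L V]
    [FiniteDimensional L V]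
    (ρ : (L ≃ₐ[K] L) →* Multiplicative (AddAut V))
    (hρ : ∀ (σ : L ≃ₐ[K] L) (a : L) (v : V), Multiplicative.toAdd (ρ σ) (a • v) = σ a • Multiplicative.toAdd (ρ σ) v) :
    ∃ e : (L ⊗[K] (galoisInvariants ρ hρ)) ≃ₗ[L] V,
      ∀ (a : L) (v : galoisInvariants ρ hρ), e (a ⊗ₜ v) = a • (v : V) := by
  classical
  set W := galoisInvariants ρ hρ with hW
  set φ : L ⊗[K] W →ₗ[L] V := (W.subtype).liftBaseChange L with hφdef
  have hφ : ∀ (a : L) (v : W), φ (a ⊗ₜ v) = a • (v : V) := fun a v => rfl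
  have hsurj : Function.Surjective φ := by
    rw [← LinearMap.range_eq_top, ← top_le_iff, ← aux_span ρ hρ, Submodule.span_le]
    intro x hx
    exact ⟨(1 : L) ⊗ₜ ⟨x, hx⟩, by rw [hφ]; exact one_smul L x⟩
  set b := Module.Basis.ofVectorSpace K W with hb
  set b' := b.baseChange L with hb'
  have hcomp : ∀ i, φ (b' i) = ((b i : W) : V) := by
    intro i
    rw [hb', Module.Basis.baseChange_apply, hφ]
    exact one_smul L _
  have hli := aux_li ρ hρ (fun i => b i) b.linearIndependent
  have hinj : Function.Injective φ := by
    intro x y hxy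
    have hsub : φ (x - y) = 0 := by rw [map_sub, hxy, sub_self]
    have hrepr := b'.linearCombination_repr (x - y)
    have hφx : φ (x - y) =
        Finsupp.linearCombination L (fun i => ((b i : W) : V)) (b'.repr (x - y)) := by
      conv_lhs => rw [← hrepr]
      have hfun : (⇑φ ∘ ⇑b') = fun i => ((b i : W) : V) := funext hcomp
      rw [Finsupp.apply_linearCombination, hfun]
    have h0 : b'.repr (x - y) = 0 :=
      linearIndependent_iff.mp hli (b'.repr (x - y)) (by rw [← hφx]; exact hsub)
    have : x - y = 0 := by
      rw [← hrepr, h0, map_zero]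
    exact sub_eq_zero.mp this
  exact ⟨LinearEquiv.ofBijective φ ⟨hinj, hsurj⟩, fun a v => hφ a v⟩
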